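/- Let bx₁ (state S₁, between A₁ and B₁) and bx₂ (state S₂, between A₂ and B₂) be transparent well-behaved bx over the same lawful monad m. Define the pair bx on state S₁ × S₂ between A₁ × A₂ and B₁ × B₂ by getL := gets (fun (s₁, s₂) => (readL₁ s₁, readL₂ s₂)); setL (a₁, a₂) := fun (s₁, s₂) => do let (_, s₁') ← setL₁ a₁ s₁; let (_, s₂') ← setL₂ a₂ s₂; pure (⟨⟩, (s₁', s₂')); and dually getR := gets (fun (s₁, s₂) => (readR₁ s₁, readR₂ s₂)) and setR (b₁, b₂) := fun (s₁, s₂) => do let (_, s₁') ← setR₁ b₁ s₁; let (_, s₂') ← setR₂ b₂ s₂; pure (⟨⟩, (s₁', s₂')). Then the pair bx is transparent well-behaved: it satisfies (S_LG_L) (do setL p; getL) = (do setL p; pure p) for all p : A₁ × A₂; (G_LS_L) (do let p ← getL; setL p) = pure ⟨⟩; (S_RG_R) (do setR q; getR) = (do setR q; pure q) for all q : B₁ × B₂; and (G_RS_R) (do let q ← getR; setR q) = pure ⟨⟩. -/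
import Mathlib


universe u v

def getsS {m : Type u → Type v} [Monad m] {σ α : Type u} (f : σ → α) : StateT σ m α := do
  let s ← get
  pure (f s)

/-- A transparent bidirectional transformation over the monad `m`,
with state space `S`, between `A` and `B`. -/
structure TBX (m : Type u → Type v) (S A B : Type u) where
  readL : S → A
  readR : S → B
  setL : A → StateT S m PUnit
  setR : B → StateT S m PUnit

/-- Well-behavedness of a transparent bx: the laws (S_LG_L), (G_LS_L), (S_RG_R), (G_RS_R).
(The get–get laws hold automatically since the gets are `T`-pure queries.) -/
structure TBX.WellBehaved {m : Type u → Type v} [Monad m] {S A B : Type u}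
    (bx : TBX m S A B) : Prop where
  slgl : ∀ a : A, (do bx.setL a; getsS (m := m) bx.readL) = (do bx.setL a; pure a)
  glsl : (do let a ← getsS (m := m) bx.readL; bx.setL a) = (pure PUnit.unit : StateT S m PUnit)
  srgr : ∀ b : B, (do bx.setR b; getsS (m := m) bx.readR) = (do bx.setR b; pure b)
  grsr : (do let b ← getsS (m := m) bx.readR; bx.setR b) = (pure PUnit.unit : StateT S m PUnit)

/-- The pair of two transparent bx. -/
def TBX.pair {m : Type u → Type v} [Monad m] {S₁ S₂ A₁ B₁ A₂ B₂ : Type u}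
    (bx₁ : TBX m S₁ A₁ B₁) (bx₂ : TBX m S₂ A₂ B₂) :
    TBX m (S₁ × S₂) (A₁ × A₂) (B₁ × B₂) where
  readL := fun s => (bx₁.readL s.1, bx₂.readL s.2)
  readR := fun s => (bx₁.readR s.1, bx₂.readR s.2)
  setL := fun a => fun s => do
    let (_, s₁') ← (bx₁.setL a.1).run s.1
    let (_, s₂') ← (bx₂.setL a.2).run s.2
    pure (PUnit.unit, (s₁', s₂'))
  setR := fun b => fun s => do
    let (_, s₁') ← (bx₁.setR b.1).run s.1
    let (_, s₂') ← (bx₂.setR b.2).run s.2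
    pure (PUnit.unit, (s₁', s₂'))

theorem keyA {m : Type u → Type v} [Monad m] [LawfulMonad m] {S A : Type u}
    (st : A → StateT S m PUnit) (rd : S → A)
    (h : ∀ a : A, (do st a; getsS (m := m) rd) = (do st a; pure a))
    (a : A) (s : S) {β : Type u} (g : A → S → m β) :
    ((st a).run s >>= fun p => g (rd p.2) p.2) = ((st a).run s >>= fun p => g a p.2) := by
  have h0 : (st a).run s >>= (fun p => pure (rd p.2, p.2)) =
      (st a).run s >>= (fun p => pure (a, p.2)) := by
    have := congrFun (h a) s
    simpa [getsS, StateT.run, bind, StateT.bind, get, getThe, MonadStateOf.get, StateT.get,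
      pure, StateT.pure] using this
  have e1 := congrArg (· >>= fun q : A × S => g q.1 q.2) h0
  simpa [bind_assoc] using e1

theorem keyB {m : Type u → Type v} [Monad m] [LawfulMonad m] {S A : Type u}
    (st : A → StateT S m PUnit) (rd : S → A)
    (h : (do let a ← getsS (m := m) rd; st a) = (pure PUnit.unit : StateT S m PUnit))
    (s : S) : (st (rd s)).run s = pure (PUnit.unit, s) := by
  have := congrFun h s
  simpa [getsS, StateT.run, bind, StateT.bind, get, getThe, MonadStateOf.get, StateT.get,
    pure, StateT.pure] using this

theorem pair_slgl {m : Type u → Type v} [Monad m] [LawfulMonad m] {S₁ S₂ A₁ A₂ : Type u}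
    (st₁ : A₁ → StateT S₁ m PUnit) (rd₁ : S₁ → A₁)
    (st₂ : A₂ → StateT S₂ m PUnit) (rd₂ : S₂ → A₂)
    (hs₁ : ∀ a : A₁, (do st₁ a; getsS (m := m) rd₁) = (do st₁ a; pure a))
    (hs₂ : ∀ a : A₂, (do st₂ a; getsS (m := m) rd₂) = (do st₂ a; pure a))
    (a : A₁ × A₂) (s₁ : S₁) (s₂ : S₂) :
    ((st₁ a.1).run s₁ >>= fun p₁ => (st₂ a.2).run s₂ >>= fun p₂ =>
      pure ((rd₁ p₁.2, rd₂ p₂.2), (p₁.2, p₂.2))) =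
    ((st₁ a.1).run s₁ >>= fun p₁ => (st₂ a.2).run s₂ >>= fun p₂ =>
      pure (a, (p₁.2, p₂.2))) := by
  calc ((st₁ a.1).run s₁ >>= fun p₁ => (st₂ a.2).run s₂ >>= fun p₂ =>
          pure ((rd₁ p₁.2, rd₂ p₂.2), (p₁.2, p₂.2)))
      = ((st₁ a.1).run s₁ >>= fun p₁ => (st₂ a.2).run s₂ >>= fun p₂ =>
          pure ((rd₁ p₁.2, a.2), (p₁.2, p₂.2))) := by
        refine bind_congr fun p₁ => ?_
        exact keyA st₂ rd₂ hs₂ a.2 s₂ (g := fun y s₂' => pure ((rd₁ p₁.2, y), (p₁.2, s₂')))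
    _ = ((st₁ a.1).run s₁ >>= fun p₁ => (st₂ a.2).run s₂ >>= fun p₂ =>
          pure (a, (p₁.2, p₂.2))) := by
        have := keyA st₁ rd₁ hs₁ a.1 s₁
          (g := fun x s₁' => (st₂ a.2).run s₂ >>= fun p₂ => pure ((x, a.2), (s₁', p₂.2)))
        simpa using this

theorem pair_wellBehaved
    {m : Type u → Type v} [Monad m] [LawfulMonad m] {S₁ S₂ A₁ B₁ A₂ B₂ : Type u}
    (bx₁ : TBX m S₁ A₁ B₁) (bx₂ : TBX m S₂ A₂ B₂)
    (h₁ : bx₁.WellBehaved) (h₂ : bx₂.WellBehaved) :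
    (bx₁.pair bx₂).WellBehaved := by
  constructor
  · intro a
    funext s
    obtain ⟨s₁, s₂⟩ := s
    simp only [TBX.pair, getsS, bind, StateT.bind, StateT.run, get, getThe, MonadStateOf.get,
      StateT.get, pure, StateT.pure, map_eq_pure_bind, bind_assoc, pure_bind]
    exact pair_slgl bx₁.setL bx₁.readL bx₂.setL bx₂.readL h₁.slgl h₂.slgl a s₁ s₂
  · funext s
    obtain ⟨s₁, s₂⟩ := s
    simp only [TBX.pair, getsS, bind, StateT.bind, StateT.run, get, getThe, MonadStateOf.get,
      StateT.get, pure, StateT.pure, map_eq_pure_bind, bind_assoc, pure_bind]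
    rw [show (bx₁.setL (bx₁.readL s₁)) s₁ = pure (PUnit.unit, s₁) from keyB bx₁.setL bx₁.readL h₁.glsl s₁]
    rw [pure_bind]
    rw [show (bx₂.setL (bx₂.readL s₂)) s₂ = pure (PUnit.unit, s₂) from keyB bx₂.setL bx₂.readL h₂.glsl s₂]
    simp
  · intro b
    funext s
    obtain ⟨s₁, s₂⟩ := s
    simp only [TBX.pair, getsS, bind, StateT.bind, StateT.run, get, getThe, MonadStateOf.get,
      StateT.get, pure, StateT.pure, map_eq_pure_bind, bind_assoc, pure_bind]
    exact pair_slgl bx₁.setR bx₁.readR bx₂.setR bx₂.readR h₁.srgr h₂.srgr b s₁ s₂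
  · funext s
    obtain ⟨s₁, s₂⟩ := s
    simp only [TBX.pair, getsS, bind, StateT.bind, StateT.run, get, getThe, MonadStateOf.get,
      StateT.get, pure, StateT.pure, map_eq_pure_bind, bind_assoc, pure_bind]
    rw [show (bx₁.setR (bx₁.readR s₁)) s₁ = pure (PUnit.unit, s₁) from keyB bx₁.setR bx₁.readR h₁.grsr s₁]
    rw [pure_bind]
    rw [show (bx₂.setR (bx₂.readR s₂)) s₂ = pure (PUnit.unit, s₂) from keyB bx₂.setR bx₂.readR h₂.grsr s₂]
    simp
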